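/- arXiv:1305.3235 — 2 statements merged into one kernel-verified Lean document; each statement's English description precedes it below -/
import Mathlib

section
/- Let Σ and Σ̂ be p×p real symmetric positive semidefinite matrices, let r ∈ {1,…,p−1}, and let σ₁(Σ) ≥ ⋯ ≥ σ_p(Σ) denote the eigenvalues of Σ in nonincreasing order. Suppose V ∈ O(p,r) is a matrix whose columns are orthonormal eigenvectors of Σ associated with its r largest eigenvalues σ₁(Σ),…,σ_r(Σ), and V̂ ∈ O(p,r) is a matrix whose columns are orthonormal eigenvectors of Σ̂ associated with its r largest eigenvalues. Then ‖Σ̂ − Σ‖ ≥ (1/2)·( σ_r(Σ) − σ_{r+1}(Σ) )·‖V̂ V̂' − V V'‖. -/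
open Matrix

/-- The spectral norm (largest singular value) of a real matrix. -/
noncomputable def specNorm {m n : Type*} [Fintype m] [Fintype n] [DecidableEq n]
    (A : Matrix m n ℝ) : ℝ :=
  ‖LinearMap.toContinuousLinearMap (Matrix.toEuclideanLin A)‖

namespace DKaux

variable {p : ℕ}

noncomputable def toE (x : Fin p → ℝ) : EuclideanSpace ℝ (Fin p) := (WithLp.equiv 2 _).symm x

lemma dps_nonneg (x : Fin p → ℝ) : 0 ≤ x ⬝ᵥ x :=
  Finset.sum_nonneg fun i _ => mul_self_nonneg (x i)

lemma toE_norm (x : Fin p → ℝ) : ‖toE x‖ = Real.sqrt (x ⬝ᵥ x) := by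
  rw [EuclideanSpace.norm_eq]
  congr 1
  simp [toE, WithLp.equiv_symm_apply, PiLp.toLp_apply, dotProduct, Real.norm_eq_abs, sq_abs, pow_two]

lemma toE_inner (x y : Fin p → ℝ) : (inner ℝ (toE x) (toE y) : ℝ) = x ⬝ᵥ y := by
  rw [PiLp.inner_apply]
  simp [toE, WithLp.equiv_symm_apply, PiLp.toLp_apply, dotProduct, mul_comm]

lemma specNorm_mulVec_le (A : Matrix (Fin p) (Fin p) ℝ) (x : Fin p → ℝ) :
    Real.sqrt ((A *ᵥ x) ⬝ᵥ (A *ᵥ x)) ≤ specNorm A * Real.sqrt (x ⬝ᵥ x) := by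
  rw [← toE_norm, ← toE_norm]
  have h : toE (A *ᵥ x) = LinearMap.toContinuousLinearMap (Matrix.toEuclideanLin A) (toE x) := by
    simp [toE, WithLp.equiv_symm_apply, Matrix.toEuclideanLin_apply_piLp_toLp]
  rw [h]
  exact (LinearMap.toContinuousLinearMap (Matrix.toEuclideanLin A)).le_opNorm _

lemma specNorm_nonneg (A : Matrix (Fin p) (Fin p) ℝ) : 0 ≤ specNorm A := norm_nonneg _

lemma specNorm_mulVec_sq_le (A : Matrix (Fin p) (Fin p) ℝ) (x : Fin p → ℝ) :
    (A *ᵥ x) ⬝ᵥ (A *ᵥ x) ≤ specNorm A ^ 2 * (x ⬝ᵥ x) := by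
  have h := specNorm_mulVec_le A x
  have h1 := dps_nonneg (A *ᵥ x)
  have h2 := dps_nonneg x
  have := mul_self_le_mul_self (Real.sqrt_nonneg _) h
  rw [Real.mul_self_sqrt h1] at this
  calc (A *ᵥ x) ⬝ᵥ (A *ᵥ x) ≤ (specNorm A * Real.sqrt (x ⬝ᵥ x)) *
        (specNorm A * Real.sqrt (x ⬝ᵥ x)) := this
    _ = specNorm A ^ 2 * (Real.sqrt (x ⬝ᵥ x) * Real.sqrt (x ⬝ᵥ x)) := by ring
    _ = specNorm A ^ 2 * (x ⬝ᵥ x) := by rw [Real.mul_self_sqrt h2]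

lemma specNorm_le_bound (A : Matrix (Fin p) (Fin p) ℝ) (c : ℝ) (hc : 0 ≤ c)
    (h : ∀ x : Fin p → ℝ, Real.sqrt ((A *ᵥ x) ⬝ᵥ (A *ᵥ x)) ≤ c * Real.sqrt (x ⬝ᵥ x)) :
    specNorm A ≤ c := by
  apply ContinuousLinearMap.opNorm_le_bound _ hc
  intro v
  have hv : v = toE (WithLp.equiv 2 _ v) := by simp [toE]
  rw [hv]
  have h2 : LinearMap.toContinuousLinearMap (Matrix.toEuclideanLin A) (toE (WithLp.equiv 2 _ v))
      = toE (A *ᵥ (WithLp.equiv 2 _ v)) := by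
    simp [toE, Matrix.toEuclideanLin_apply]
  rw [h2, toE_norm, toE_norm]
  exact h _

end DKaux

namespace DKaux2
open DKaux
variable {p : ℕ}

lemma specNorm_mul_le (A B : Matrix (Fin p) (Fin p) ℝ) :
    specNorm (A * B) ≤ specNorm A * specNorm B := by
  apply specNorm_le_bound _ _ (mul_nonneg (specNorm_nonneg A) (specNorm_nonneg B))
  intro x
  rw [← Matrix.mulVec_mulVec]
  calc Real.sqrt ((A *ᵥ (B *ᵥ x)) ⬝ᵥ (A *ᵥ (B *ᵥ x))) ≤
      specNorm A * Real.sqrt ((B *ᵥ x) ⬝ᵥ (B *ᵥ x)) := specNorm_mulVec_le A _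
    _ ≤ specNorm A * (specNorm B * Real.sqrt (x ⬝ᵥ x)) := by
        exact mul_le_mul_of_nonneg_left (specNorm_mulVec_le B x) (specNorm_nonneg A)
    _ = specNorm A * specNorm B * Real.sqrt (x ⬝ᵥ x) := by ring

lemma specNorm_add_le (A B : Matrix (Fin p) (Fin p) ℝ) :
    specNorm (A + B) ≤ specNorm A + specNorm B := by
  unfold specNorm
  rw [map_add, map_add]
  exact norm_add_le _ _

lemma specNorm_neg (A : Matrix (Fin p) (Fin p) ℝ) : specNorm (-A) = specNorm A := by
  unfold specNorm
  rw [map_neg, map_neg, norm_neg]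

lemma specNorm_dot_le (A : Matrix (Fin p) (Fin p) ℝ) (x y : Fin p → ℝ) :
    |x ⬝ᵥ (A *ᵥ y)| ≤ specNorm A * Real.sqrt (x ⬝ᵥ x) * Real.sqrt (y ⬝ᵥ y) := by
  have h1 : |x ⬝ᵥ (A *ᵥ y)| = |(inner ℝ (toE x) (toE (A *ᵥ y)) : ℝ)| := by rw [toE_inner]
  rw [h1]
  calc |(inner ℝ (toE x) (toE (A *ᵥ y)) : ℝ)| ≤ ‖toE x‖ * ‖toE (A *ᵥ y)‖ :=
      abs_real_inner_le_norm _ _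
    _ = Real.sqrt (x ⬝ᵥ x) * Real.sqrt ((A *ᵥ y) ⬝ᵥ (A *ᵥ y)) := by rw [toE_norm, toE_norm]
    _ ≤ Real.sqrt (x ⬝ᵥ x) * (specNorm A * Real.sqrt (y ⬝ᵥ y)) := by
        exact mul_le_mul_of_nonneg_left (specNorm_mulVec_le A y) (Real.sqrt_nonneg _)
    _ = specNorm A * Real.sqrt (x ⬝ᵥ x) * Real.sqrt (y ⬝ᵥ y) := by ring

section Orth
variable {W : Matrix (Fin p) (Fin p) ℝ} (hW : Wᵀ * W = 1)
include hW

lemma orth_mul_right : W * Wᵀ = 1 := mul_eq_one_comm.mp hW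

lemma orth_nsq (x : Fin p → ℝ) : (W *ᵥ x) ⬝ᵥ (W *ᵥ x) = x ⬝ᵥ x := by
  rw [Matrix.dotProduct_mulVec, ← Matrix.mulVec_transpose, Matrix.mulVec_mulVec, hW,
    Matrix.one_mulVec, dotProduct_comm]

lemma orth_nsq_t (x : Fin p → ℝ) : (Wᵀ *ᵥ x) ⬝ᵥ (Wᵀ *ᵥ x) = x ⬝ᵥ x := by
  rw [Matrix.dotProduct_mulVec, ← Matrix.mulVec_transpose, Matrix.transpose_transpose,
    Matrix.mulVec_mulVec, orth_mul_right hW, Matrix.one_mulVec, dotProduct_comm]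

lemma conj_bound (d : Fin p → ℝ) (c : ℝ) (hc : 0 ≤ c) (hd : ∀ i, |d i| ≤ c) :
    specNorm (W * Matrix.diagonal d * Wᵀ) ≤ c := by
  apply specNorm_le_bound _ _ hc
  intro x
  rw [← Matrix.mulVec_mulVec, ← Matrix.mulVec_mulVec, orth_nsq hW]
  have key : (Matrix.diagonal d *ᵥ (Wᵀ *ᵥ x)) ⬝ᵥ (Matrix.diagonal d *ᵥ (Wᵀ *ᵥ x)) ≤
      c ^ 2 * ((Wᵀ *ᵥ x) ⬝ᵥ (Wᵀ *ᵥ x)) := by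
    unfold dotProduct
    rw [Finset.mul_sum]
    apply Finset.sum_le_sum
    intro i _
    rw [Matrix.mulVec_diagonal]
    have h := abs_le.mp (hd i)
    have h2 : d i ^ 2 ≤ c ^ 2 := sq_le_sq' (by linarith [h.1]) h.2
    nlinarith [mul_le_mul_of_nonneg_right h2 (sq_nonneg ((Wᵀ *ᵥ x) i))]
  calc Real.sqrt ((Matrix.diagonal d *ᵥ (Wᵀ *ᵥ x)) ⬝ᵥ (Matrix.diagonal d *ᵥ (Wᵀ *ᵥ x)))
      ≤ Real.sqrt (c ^ 2 * ((Wᵀ *ᵥ x) ⬝ᵥ (Wᵀ *ᵥ x))) := Real.sqrt_le_sqrt key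
    _ = c * Real.sqrt ((Wᵀ *ᵥ x) ⬝ᵥ (Wᵀ *ᵥ x)) := by
        rw [Real.sqrt_mul (sq_nonneg c), Real.sqrt_sq hc]
    _ = c * Real.sqrt (x ⬝ᵥ x) := by rw [orth_nsq_t hW]

lemma conj_mul (a b : Fin p → ℝ) :
    (W * Matrix.diagonal a * Wᵀ) * (W * Matrix.diagonal b * Wᵀ)
      = W * Matrix.diagonal (fun i => a i * b i) * Wᵀ := by
  have : Matrix.diagonal a * Matrix.diagonal b = Matrix.diagonal (fun i => a i * b i) := by
    rw [Matrix.diagonal_mul_diagonal]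
  calc (W * Matrix.diagonal a * Wᵀ) * (W * Matrix.diagonal b * Wᵀ)
      = W * Matrix.diagonal a * (Wᵀ * W) * Matrix.diagonal b * Wᵀ := by
        simp only [Matrix.mul_assoc]
    _ = W * Matrix.diagonal (fun i => a i * b i) * Wᵀ := by
        rw [hW, Matrix.mul_one, Matrix.mul_assoc W, this, Matrix.mul_assoc]

lemma conj_one : W * Matrix.diagonal (fun _ : Fin p => (1:ℝ)) * Wᵀ = 1 := by
  rw [Matrix.diagonal_one, Matrix.mul_one, orth_mul_right hW]

omit hW in
lemma conj_sub (a b : Fin p → ℝ) :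
    (W * Matrix.diagonal a * Wᵀ) - (W * Matrix.diagonal b * Wᵀ)
      = W * Matrix.diagonal (fun i => a i - b i) * Wᵀ := by
  rw [← Matrix.sub_mul, ← Matrix.mul_sub, ← Matrix.diagonal_sub]

end Orth
end DKaux2

namespace DKaux2b
open DKaux DKaux2
variable {p : ℕ}

lemma specNorm_mul3_le (A B C : Matrix (Fin p) (Fin p) ℝ) {a b c : ℝ}
    (hA : specNorm A ≤ a) (hB : specNorm B ≤ b) (hC : specNorm C ≤ c)
    (ha : 0 ≤ a) (hb : 0 ≤ b) (hc : 0 ≤ c) :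
    specNorm (A * B * C) ≤ a * b * c := by
  calc specNorm (A * B * C) ≤ specNorm (A * B) * specNorm C := specNorm_mul_le _ _
    _ ≤ (a * b) * c := by
        apply mul_le_mul _ hC (specNorm_nonneg C) (by positivity)
        calc specNorm (A * B) ≤ specNorm A * specNorm B := specNorm_mul_le _ _
          _ ≤ a * b := mul_le_mul hA hB (specNorm_nonneg B) ha

end DKaux2b

namespace DKaux3
open DKaux DKaux2 DKaux2b

lemma sintheta (p r : ℕ) (hr : 1 ≤ r) (hrp : r < p)
    (e ehat : Fin p → ℝ) (W What : Matrix (Fin p) (Fin p) ℝ)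
    (he : Antitone e) (hehat : Antitone ehat) (hepos : ∀ i, 0 ≤ e i)
    (hW : Wᵀ * W = 1) (hWhat : Whatᵀ * What = 1)
    (hb : 0 < ehat ⟨r-1, Nat.lt_of_le_of_lt (Nat.sub_le r 1) hrp⟩)
    (hgap : e ⟨r, hrp⟩ < ehat ⟨r-1, Nat.lt_of_le_of_lt (Nat.sub_le r 1) hrp⟩) :
    specNorm ((1 - W * Matrix.diagonal (fun i : Fin p => if (i:ℕ) < r then (1:ℝ) else 0) * Wᵀ) *
        (What * Matrix.diagonal (fun i : Fin p => if (i:ℕ) < r then (1:ℝ) else 0) * Whatᵀ)) *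
      (ehat ⟨r-1, Nat.lt_of_le_of_lt (Nat.sub_le r 1) hrp⟩ - e ⟨r, hrp⟩) ≤
    specNorm (What * Matrix.diagonal ehat * Whatᵀ - W * Matrix.diagonal e * Wᵀ) := by
  set β := ehat ⟨r-1, by omega⟩ with hβdef
  set γ := e ⟨r, hrp⟩ with hγdef
  set ind : Fin p → ℝ := fun i : Fin p => if (i:ℕ) < r then (1:ℝ) else 0 with hind
  set q : Fin p → ℝ := fun i => 1 - ind i with hq
  set g : Fin p → ℝ := fun i => if (i:ℕ) < r then (ehat i)⁻¹ else 0 with hg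
  have hehat_ge : ∀ i : Fin p, (i:ℕ) < r → β ≤ ehat i := by
    intro i hi
    apply hehat
    exact Fin.mk_le_mk.mpr (by omega)
  set P := W * Matrix.diagonal ind * Wᵀ with hP
  set Ph := What * Matrix.diagonal ind * Whatᵀ with hPh
  set S := W * Matrix.diagonal e * Wᵀ with hS
  set Sh := What * Matrix.diagonal ehat * Whatᵀ with hSh
  set N := What * Matrix.diagonal g * Whatᵀ with hN
  set Q : Matrix (Fin p) (Fin p) ℝ := 1 - P with hQdef
  set T := Q * Ph with hT
  set E := Sh - S with hE
  have hQ : Q = W * Matrix.diagonal q * Wᵀ := by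
    have h0 : (fun i => (1:ℝ) - ind i) = q := by funext i; rw [hq]
    rw [hQdef, hP, ← conj_one hW, conj_sub (W := W) (fun _ => (1:ℝ)) ind, h0]
  -- identities
  have hShN : Sh * N = Ph := by
    have h0 : (fun i => ehat i * g i) = ind := by
      funext i
      by_cases hi : (i:ℕ) < r
      · simp only [hg, hind, if_pos hi]
        exact mul_inv_cancel₀ (ne_of_gt (lt_of_lt_of_le hb (hehat_ge i hi)))
      · simp only [hg, hind, if_neg hi, mul_zero]
    rw [hSh, hN, conj_mul hWhat, h0, ← hPh]
  have hPhN : Ph * N = N := by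
    have h0 : (fun i => ind i * g i) = g := by
      funext i
      by_cases hi : (i:ℕ) < r <;> simp [hg, hind, hi]
    rw [hPh, hN, conj_mul hWhat, h0, ← hN]
  have hQS : Q * S = S * Q := by
    have h0 : (fun i => q i * e i) = (fun i => e i * q i) := by
      funext i; ring
    rw [hQ, hS, conj_mul hW, conj_mul hW, h0]
  have hQQ : Q * Q = Q := by
    have h0 : (fun i => q i * q i) = q := by
      funext i
      by_cases hi : (i:ℕ) < r <;> simp [hq, hind, hi]
    rw [hQ, conj_mul hW, h0]
  have claim : T = Q * E * N + S * Q * T * N := by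
    have h1 : Q * E * N = T - Q * S * N := by
      rw [hE, Matrix.mul_sub, Matrix.sub_mul, Matrix.mul_assoc Q Sh N, hShN, hT]
    have h2 : S * Q * T * N = Q * S * N := by
      rw [hT]
      calc S * Q * (Q * Ph) * N = S * (Q * Q) * (Ph * N) := by
            simp only [Matrix.mul_assoc]
        _ = S * Q * N := by rw [hQQ, hPhN]
        _ = Q * S * N := by rw [← hQS]
    rw [h1, h2]
    abel
  -- norm bounds
  have hQn : specNorm Q ≤ 1 := by
    rw [hQ]
    apply conj_bound hW _ _ zero_le_one
    intro i
    by_cases hi : (i:ℕ) < r <;> simp [hq, hind, hi]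
  have hNn : specNorm N ≤ β⁻¹ := by
    rw [hN]
    apply conj_bound hWhat _ _ (inv_nonneg.mpr hb.le)
    intro i
    by_cases hi : (i:ℕ) < r
    · simp only [hg, if_pos hi]
      have h1 : 0 < ehat i := lt_of_lt_of_le hb (hehat_ge i hi)
      rw [abs_of_nonneg (inv_nonneg.mpr h1.le)]
      exact inv_anti₀ hb (hehat_ge i hi)
    · simp only [hg, if_neg hi, abs_zero]
      exact inv_nonneg.mpr hb.le
  have hγ0 : 0 ≤ γ := hepos _
  have hSQn : specNorm (S * Q) ≤ γ := by
    rw [hS, hQ, conj_mul hW]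
    apply conj_bound hW _ _ hγ0
    intro i
    by_cases hi : (i:ℕ) < r
    · simp [hq, hind, hi, hγ0]
    · simp only [hq, hind, if_neg hi, sub_zero, mul_one]
      rw [abs_of_nonneg (hepos i)]
      exact he (Fin.mk_le_mk.mpr (by omega) : (⟨r, hrp⟩ : Fin p) ≤ i)
  have hEn : (0:ℝ) ≤ specNorm E := specNorm_nonneg E
  have hTn : (0:ℝ) ≤ specNorm T := specNorm_nonneg T
  have hbinv : (0:ℝ) ≤ β⁻¹ := inv_nonneg.mpr hb.le
  have h1 : specNorm (Q * E * N) ≤ 1 * specNorm E * β⁻¹ :=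
    specNorm_mul3_le Q E N hQn le_rfl hNn zero_le_one hEn hbinv
  have h2 : specNorm (S * Q * T * N) ≤ γ * specNorm T * β⁻¹ :=
    specNorm_mul3_le (S * Q) T N hSQn le_rfl hNn hγ0 hTn hbinv
  have hfin : specNorm T ≤ specNorm E * β⁻¹ + γ * specNorm T * β⁻¹ := by
    calc specNorm T = specNorm (Q * E * N + S * Q * T * N) := by rw [← claim]
      _ ≤ specNorm (Q * E * N) + specNorm (S * Q * T * N) := specNorm_add_le _ _
      _ ≤ specNorm E * β⁻¹ + γ * specNorm T * β⁻¹ := by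
          apply add_le_add _ h2
          calc specNorm (Q * E * N) ≤ 1 * specNorm E * β⁻¹ := h1
            _ = specNorm E * β⁻¹ := by ring
  have h6 := mul_le_mul_of_nonneg_right hfin hb.le
  have h7 : (specNorm E * β⁻¹ + γ * specNorm T * β⁻¹) * β = specNorm E + γ * specNorm T := by
    field_simp
  rw [h7] at h6
  nlinarith [h6]

end DKaux3

namespace DKaux4
open DKaux DKaux2 Finset

lemma col_dot {p : ℕ} (W : Matrix (Fin p) (Fin p) ℝ) (i j : Fin p) (x : Fin p → ℝ) :
    (fun l => W l i) ⬝ᵥ x = (Wᵀ *ᵥ x) i := by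
  simp [Matrix.mulVec, dotProduct, Matrix.transpose_apply]

set_option maxHeartbeats 2000000 in
lemma weyl (p : ℕ) (k : Fin p)
    (e ehat : Fin p → ℝ) (W What : Matrix (Fin p) (Fin p) ℝ)
    (he : Antitone e) (hehat : Antitone ehat)
    (hW : Wᵀ * W = 1) (hWhat : Whatᵀ * What = 1) :
    e k - specNorm (What * Matrix.diagonal ehat * Whatᵀ - W * Matrix.diagonal e * Wᵀ)
      ≤ ehat k := by
  classical
  set E := What * Matrix.diagonal ehat * Whatᵀ - W * Matrix.diagonal e * Wᵀ with hE
  set ε := specNorm E with hε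
  -- columns
  set w : Fin p → EuclideanSpace ℝ (Fin p) := fun j => toE (fun i => W i j) with hw
  set wh : Fin p → EuclideanSpace ℝ (Fin p) := fun j => toE (fun i => What i j) with hwh
  have hdot : ∀ (M : Matrix (Fin p) (Fin p) ℝ) (i j : Fin p),
      (fun l => M l i) ⬝ᵥ (fun l => M l j) = (Mᵀ * M) i j := by
    intro M i j
    simp [Matrix.mul_apply, dotProduct, Matrix.transpose_apply]
  have on_w : Orthonormal ℝ w := by
    rw [orthonormal_iff_ite]
    intro i j
    rw [hw]
    simp only
    rw [toE_inner, hdot, hW, Matrix.one_apply]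
  have on_wh : Orthonormal ℝ wh := by
    rw [orthonormal_iff_ite]
    intro i j
    rw [hwh]
    simp only
    rw [toE_inner, hdot, hWhat, Matrix.one_apply]
  -- subspaces
  set U := Submodule.span ℝ (Set.range (fun s : {j : Fin p // j ≤ k} => w s.val)) with hU
  set Y := Submodule.span ℝ (Set.range (fun s : {j : Fin p // k ≤ j} => wh s.val)) with hY
  have liU : LinearIndependent ℝ (fun s : {j : Fin p // j ≤ k} => w s.val) :=
    on_w.linearIndependent.comp Subtype.val Subtype.val_injective
  have liY : LinearIndependent ℝ (fun s : {j : Fin p // k ≤ j} => wh s.val) :=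
    on_wh.linearIndependent.comp Subtype.val Subtype.val_injective
  have cardU : Fintype.card {j : Fin p // j ≤ k} = (k:ℕ) + 1 := by
    rw [Fintype.card_subtype]
    have : Finset.filter (fun j => j ≤ k) Finset.univ = Finset.Iic k := by
      ext j; simp
    rw [this, Fin.card_Iic]
  have cardY : Fintype.card {j : Fin p // k ≤ j} = p - (k:ℕ) := by
    rw [Fintype.card_subtype]
    have : Finset.filter (fun j => k ≤ j) Finset.univ = Finset.Ici k := by
      ext j; simp
    rw [this, Fin.card_Ici]
  have frU : Module.finrank ℝ U = (k:ℕ) + 1 := by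
    rw [hU, finrank_span_eq_card liU, cardU]
  have frY : Module.finrank ℝ Y = p - (k:ℕ) := by
    rw [hY, finrank_span_eq_card liY, cardY]
  have hsum := Submodule.finrank_sup_add_finrank_inf_eq U Y
  have hle : Module.finrank ℝ ↥(U ⊔ Y) ≤ p := by
    calc Module.finrank ℝ ↥(U ⊔ Y) ≤ Module.finrank ℝ (EuclideanSpace ℝ (Fin p)) :=
        Submodule.finrank_le _
      _ = p := by rw [finrank_euclideanSpace, Fintype.card_fin]
  have hne : U ⊓ Y ≠ ⊥ := by
    intro hbot
    rw [hbot, finrank_bot] at hsum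
    have hk := k.isLt
    omega
  obtain ⟨x, hxmem, hx0⟩ := Submodule.exists_mem_ne_zero_of_ne_bot hne
  have hxU : x ∈ U := hxmem.1
  have hxY : x ∈ Y := hxmem.2
  set xf : Fin p → ℝ := WithLp.equiv 2 _ x with hxf
  have htoE : toE xf = x := by simp [toE, hxf]
  have hxf0 : xf ≠ 0 := by
    intro h
    apply hx0
    have := congrArg (WithLp.equiv 2 (Fin p → ℝ)).symm h
    rw [Equiv.symm_apply_apply] at this
    rw [this]
    rfl
  -- coefficient vanishing
  have cW : ∀ j : Fin p, ¬(j ≤ k) → (Wᵀ *ᵥ xf) j = 0 := by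
    intro j hj
    have horth : U ≤ (ℝ ∙ (w j))ᗮ := by
      rw [hU, Submodule.span_le]
      rintro _ ⟨s, rfl⟩
      rw [SetLike.mem_coe, Submodule.mem_orthogonal_singleton_iff_inner_right]
      have := orthonormal_iff_ite.mp on_w j s.val
      rw [this, if_neg]
      intro hjs
      exact hj (hjs ▸ s.property)
    have h0 : (inner ℝ (w j) x : ℝ) = 0 :=
      Submodule.mem_orthogonal_singleton_iff_inner_right.mp (horth hxU)
    rw [← col_dot W j j xf, ← toE_inner, htoE]
    exact h0
  have cWh : ∀ j : Fin p, ¬(k ≤ j) → (Whatᵀ *ᵥ xf) j = 0 := by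
    intro j hj
    have horth : Y ≤ (ℝ ∙ (wh j))ᗮ := by
      rw [hY, Submodule.span_le]
      rintro _ ⟨s, rfl⟩
      rw [SetLike.mem_coe, Submodule.mem_orthogonal_singleton_iff_inner_right]
      have := orthonormal_iff_ite.mp on_wh j s.val
      rw [this, if_neg]
      intro hjs
      exact hj (hjs ▸ s.property)
    have h0 : (inner ℝ (wh j) x : ℝ) = 0 :=
      Submodule.mem_orthogonal_singleton_iff_inner_right.mp (horth hxY)
    rw [← col_dot What j j xf, ← toE_inner, htoE]
    exact h0
  -- quadratic forms
  set c := Wᵀ *ᵥ xf with hcdef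
  set ch := Whatᵀ *ᵥ xf with hchdef
  have hq1 : xf ⬝ᵥ ((W * Matrix.diagonal e * Wᵀ) *ᵥ xf) = c ⬝ᵥ (Matrix.diagonal e *ᵥ c) := by
    rw [← Matrix.mulVec_mulVec, ← Matrix.mulVec_mulVec, Matrix.dotProduct_mulVec xf W,
      ← Matrix.mulVec_transpose]
  have hq2 : xf ⬝ᵥ ((What * Matrix.diagonal ehat * Whatᵀ) *ᵥ xf)
      = ch ⬝ᵥ (Matrix.diagonal ehat *ᵥ ch) := by
    rw [← Matrix.mulVec_mulVec, ← Matrix.mulVec_mulVec, Matrix.dotProduct_mulVec xf What,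
      ← Matrix.mulVec_transpose]
  have hnsq : xf ⬝ᵥ xf = c ⬝ᵥ c := (orth_nsq_t hW xf).symm
  have hnsqh : xf ⬝ᵥ xf = ch ⬝ᵥ ch := (orth_nsq_t hWhat xf).symm
  have hlow : e k * (xf ⬝ᵥ xf) ≤ c ⬝ᵥ (Matrix.diagonal e *ᵥ c) := by
    rw [hnsq]
    unfold dotProduct
    rw [Finset.mul_sum]
    apply Finset.sum_le_sum
    intro j _
    rw [Matrix.mulVec_diagonal]
    by_cases hj : j ≤ k
    · have hje := he hj
      nlinarith [sq_nonneg (c j)]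
    · rw [cW j hj]
      simp
  have hup : ch ⬝ᵥ (Matrix.diagonal ehat *ᵥ ch) ≤ ehat k * (xf ⬝ᵥ xf) := by
    rw [hnsqh]
    unfold dotProduct
    rw [Finset.mul_sum]
    apply Finset.sum_le_sum
    intro j _
    rw [Matrix.mulVec_diagonal]
    by_cases hj : k ≤ j
    · have hje := hehat hj
      nlinarith [sq_nonneg (ch j)]
    · rw [cWh j hj]
      simp
  have hEdot : |xf ⬝ᵥ (E *ᵥ xf)| ≤ ε * (xf ⬝ᵥ xf) := by
    have h := specNorm_dot_le E xf xf
    rw [mul_assoc, Real.mul_self_sqrt (dps_nonneg xf)] at h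
    exact h
  have hsplit : xf ⬝ᵥ (E *ᵥ xf)
      = ch ⬝ᵥ (Matrix.diagonal ehat *ᵥ ch) - c ⬝ᵥ (Matrix.diagonal e *ᵥ c) := by
    rw [hE, Matrix.sub_mulVec, dotProduct_sub, hq1, hq2]
  have hpos : 0 < xf ⬝ᵥ xf :=
    lt_of_le_of_ne (dps_nonneg xf) (fun h => hxf0 (dotProduct_self_eq_zero.mp h.symm))
  have habs := (abs_le.mp hEdot).1
  have key : (e k - ε) * (xf ⬝ᵥ xf) ≤ ehat k * (xf ⬝ᵥ xf) := by nlinarith [hlow, hup, habs]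
  exact le_of_mul_le_mul_right key hpos

end DKaux4

namespace DKaux5
open DKaux DKaux2 DKaux2b DKaux3 DKaux4 Finset

variable {p : ℕ}

lemma conj_quad (M : Matrix (Fin p) (Fin p) ℝ) (d : Fin p → ℝ) (x : Fin p → ℝ) :
    x ⬝ᵥ ((M * Matrix.diagonal d * Mᵀ) *ᵥ x)
      = (Mᵀ *ᵥ x) ⬝ᵥ (Matrix.diagonal d *ᵥ (Mᵀ *ᵥ x)) := by
  rw [← Matrix.mulVec_mulVec, ← Matrix.mulVec_mulVec, Matrix.dotProduct_mulVec x M,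
    ← Matrix.mulVec_transpose]

lemma conj_ind_quad {M : Matrix (Fin p) (Fin p) ℝ} (hM : Mᵀ * M = 1)
    (d : Fin p → ℝ) (hd : ∀ i, 0 ≤ d i ∧ d i ≤ 1) (x : Fin p → ℝ) :
    0 ≤ x ⬝ᵥ ((M * Matrix.diagonal d * Mᵀ) *ᵥ x)
      ∧ x ⬝ᵥ ((M * Matrix.diagonal d * Mᵀ) *ᵥ x) ≤ x ⬝ᵥ x := by
  rw [conj_quad, ← orth_nsq_t hM x]
  constructor
  · apply Finset.sum_nonneg
    intro j _
    rw [Matrix.mulVec_diagonal]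
    nlinarith [(hd j).1, sq_nonneg ((Mᵀ *ᵥ x) j)]
  · apply Finset.sum_le_sum
    intro j _
    rw [Matrix.mulVec_diagonal]
    nlinarith [(hd j).1, (hd j).2, sq_nonneg ((Mᵀ *ᵥ x) j)]

lemma proj_dot {P : Matrix (Fin p) (Fin p) ℝ} (hsym : Pᵀ = P) (hidem : P * P = P)
    (x : Fin p → ℝ) : (P *ᵥ x) ⬝ᵥ (P *ᵥ x) = x ⬝ᵥ (P *ᵥ x) := by
  rw [Matrix.dotProduct_mulVec (P *ᵥ x) P x, ← Matrix.mulVec_transpose, hsym,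
    Matrix.mulVec_mulVec, hidem, dotProduct_comm, Matrix.dotProduct_mulVec x P x,
    ← Matrix.mulVec_transpose, hsym]

lemma conj_transpose_self (M : Matrix (Fin p) (Fin p) ℝ) (d : Fin p → ℝ) :
    (M * Matrix.diagonal d * Mᵀ)ᵀ = M * Matrix.diagonal d * Mᵀ := by
  rw [Matrix.transpose_mul, Matrix.transpose_mul, Matrix.transpose_transpose,
    Matrix.diagonal_transpose, Matrix.mul_assoc]

lemma numfin (δ ε ν sT : ℝ) (hδ : 2*ε < δ) (hε : 0 ≤ ε) (hν : 0 < ν) (hν1 : ν ≤ 1)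
    (hsT : 0 ≤ sT) (h1 : ν^2*(1+ν)/2 ≤ sT^2) (h2 : sT*(δ-ε) ≤ ε) : δ*ν ≤ 2*ε := by
  by_contra hcon
  push_neg at hcon
  have hδ0 : 0 < δ := by linarith
  have hde : 0 < δ - ε := by linarith
  have hsq : sT^2*(δ-ε)^2 ≤ ε^2 := by nlinarith [mul_nonneg hsT hde.le]
  have h3 : ν^2*(1+ν)*(δ-ε)^2 ≤ 2*ε^2 := by nlinarith [sq_nonneg (δ-ε)]
  have e1 : 4*ε^2 < δ^2*ν^2 := by nlinarith
  have e2 : δ^3 ≤ 2*(δ+2*ε)*(δ-ε)^2 := by nlinarith [mul_nonneg (by linarith : (0:ℝ) ≤ δ - 2*ε) (by nlinarith : (0:ℝ) ≤ δ^2 + 2*δ*ε - 2*ε^2)]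
  have e3 : ν^2*(δ+2*ε)*(δ-ε)^2 ≤ ν^2*(δ*(1+ν))*(δ-ε)^2 := by
    have : δ + 2*ε ≤ δ*(1+ν) := by nlinarith
    nlinarith [sq_nonneg (δ-ε), sq_nonneg ν, mul_nonneg (sq_nonneg ν) (sq_nonneg (δ-ε))]
  have e4 : ν^2*δ^3 ≤ 4*δ*ε^2 := by nlinarith [sq_nonneg ν]
  nlinarith [e1, e4, hδ0, sq_nonneg ν]

lemma submatrix_eq {r : ℕ} (hrp : r < p) (W : Matrix (Fin p) (Fin p) ℝ) :
    (W.submatrix id (Fin.castLE hrp.le)) * (W.submatrix id (Fin.castLE hrp.le))ᵀ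
      = W * Matrix.diagonal (fun i : Fin p => if (i:ℕ) < r then (1:ℝ) else 0) * Wᵀ := by
  ext a b
  rw [Matrix.mul_apply]
  have hR : (W * Matrix.diagonal (fun i : Fin p => if (i:ℕ) < r then (1:ℝ) else 0) * Wᵀ) a b
      = ∑ j : Fin p, (if (j:ℕ) < r then W a j * W b j else 0) := by
    rw [Matrix.mul_apply]
    apply Finset.sum_congr rfl
    intro j _
    rw [Matrix.mul_diagonal, Matrix.transpose_apply]
    by_cases hj : (j:ℕ) < r <;> simp [hj]
  rw [hR]
  have himg : (Finset.univ : Finset (Fin p)).filter (fun j : Fin p => (j:ℕ) < r)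
      = (Finset.univ : Finset (Fin r)).map
          ⟨Fin.castLE hrp.le, Fin.castLE_injective hrp.le⟩ := by
    ext j
    simp only [Finset.mem_filter, Finset.mem_univ, true_and, Finset.mem_map,
      Function.Embedding.coeFn_mk]
    constructor
    · intro hj
      exact ⟨⟨(j:ℕ), hj⟩, by ext; simp⟩
    · rintro ⟨i, rfl⟩
      exact i.isLt
  rw [← Finset.sum_filter, himg, Finset.sum_map]
  apply Finset.sum_congr rfl
  intro i _
  simp [Matrix.submatrix_apply, Matrix.transpose_apply]

end DKaux5

open DKaux DKaux2 DKaux2b DKaux3 DKaux4 DKaux5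
set_option maxHeartbeats 2000000

/-- A variant of the Davis–Kahan sin-theta theorem: if `V` (resp. `V̂`) collects
orthonormal eigenvectors of the symmetric PSD matrix `S` (resp. `Ŝ`) associated with
its `r` largest eigenvalues, then
`‖Ŝ − S‖ ≥ (1/2)·(σ_r(S) − σ_{r+1}(S))·‖V̂V̂' − VV'‖`. -/
theorem sin_theta_spectral_bound (p r : ℕ) (hr : 1 ≤ r) (hrp : r < p)
    (S Shat : Matrix (Fin p) (Fin p) ℝ)
    (e ehat : Fin p → ℝ) (W What : Matrix (Fin p) (Fin p) ℝ)
    (he : Antitone e) (hehat : Antitone ehat)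
    (hepos : ∀ i, 0 ≤ e i) (hehatpos : ∀ i, 0 ≤ ehat i)
    (hW : Wᵀ * W = 1) (hWhat : Whatᵀ * What = 1)
    (hS : S = W * Matrix.diagonal e * Wᵀ)
    (hShat : Shat = What * Matrix.diagonal ehat * Whatᵀ) :
    (1/2) * (e ⟨r-1, by omega⟩ - e ⟨r, hrp⟩) *
      specNorm ((What.submatrix id (Fin.castLE hrp.le)) *
          (What.submatrix id (Fin.castLE hrp.le))ᵀ
        - (W.submatrix id (Fin.castLE hrp.le)) *
          (W.submatrix id (Fin.castLE hrp.le))ᵀ) ≤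
    specNorm (Shat - S) := by
  subst hS hShat
  rw [submatrix_eq hrp What, submatrix_eq hrp W]
  set ind : Fin p → ℝ := fun i : Fin p => if (i:ℕ) < r then (1:ℝ) else 0 with hind
  set P := W * Matrix.diagonal ind * Wᵀ with hP
  set Ph := What * Matrix.diagonal ind * Whatᵀ with hPh
  set D := Ph - P with hDdef
  set ε := specNorm (What * Matrix.diagonal ehat * Whatᵀ - W * Matrix.diagonal e * Wᵀ) with hε
  have hεnn : 0 ≤ ε := specNorm_nonneg _
  have hγ0 : 0 ≤ e ⟨r, hrp⟩ := hepos _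
  have hrr : (⟨r-1, by omega⟩ : Fin p) ≤ ⟨r, hrp⟩ := Fin.mk_le_mk.mpr (by omega)
  have hδnn : 0 ≤ e ⟨r-1, by omega⟩ - e ⟨r, hrp⟩ := by
    have := he hrr; linarith
  -- ind has values in [0,1]
  have hind01 : ∀ i : Fin p, 0 ≤ ind i ∧ ind i ≤ 1 := by
    intro i; by_cases hi : (i:ℕ) < r <;> simp [hind, hi]
  -- symmetry and idempotence
  have hsymP : Pᵀ = P := conj_transpose_self W ind
  have hsymPh : Phᵀ = Ph := conj_transpose_self What ind
  have hindind : (fun i => ind i * ind i) = ind := by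
    funext i; by_cases hi : (i:ℕ) < r <;> simp [hind, hi]
  have hPP : P * P = P := by rw [hP, conj_mul hW, hindind]
  have hPhPh : Ph * Ph = Ph := by rw [hPh, conj_mul hWhat, hindind]
  -- D is hermitian
  have hsymD : Dᵀ = D := by rw [hDdef, Matrix.transpose_sub, hsymP, hsymPh]
  have hD_herm : D.IsHermitian := by
    have h1 : Dᴴ = Dᵀ := by
      ext i j; simp [Matrix.conjTranspose_apply]
    rw [Matrix.IsHermitian, h1, hsymD]
  -- eigenvalue of maximal absolute value
  obtain ⟨i0, -, hmax⟩ := Finset.exists_max_image (Finset.univ : Finset (Fin p))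
    (fun i => |hD_herm.eigenvalues i|) ⟨⟨0, by omega⟩, Finset.mem_univ _⟩
  set μ := hD_herm.eigenvalues i0 with hμdef
  -- specNorm D = |μ|
  have hupper : specNorm D ≤ |μ| := by
    have hstar : star (hD_herm.eigenvectorUnitary : Matrix (Fin p) (Fin p) ℝ)
        = (hD_herm.eigenvectorUnitary : Matrix (Fin p) (Fin p) ℝ)ᵀ := by
      ext i j; simp [Matrix.star_eq_conjTranspose, Matrix.conjTranspose_apply]
    have hofreal : (RCLike.ofReal ∘ hD_herm.eigenvalues : Fin p → ℝ) = hD_herm.eigenvalues := by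
      funext i; simp
    have hUorth : (hD_herm.eigenvectorUnitary : Matrix (Fin p) (Fin p) ℝ)ᵀ *
        (hD_herm.eigenvectorUnitary : Matrix (Fin p) (Fin p) ℝ) = 1 := by
      rw [← hstar]
      exact Matrix.mem_unitaryGroup_iff'.mp (hD_herm.eigenvectorUnitary).2
    have hDeq : D = (hD_herm.eigenvectorUnitary : Matrix (Fin p) (Fin p) ℝ) *
        Matrix.diagonal hD_herm.eigenvalues *
        (hD_herm.eigenvectorUnitary : Matrix (Fin p) (Fin p) ℝ)ᵀ := by
      calc D = (hD_herm.eigenvectorUnitary : Matrix (Fin p) (Fin p) ℝ) *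
          Matrix.diagonal (RCLike.ofReal ∘ hD_herm.eigenvalues) *
          star (hD_herm.eigenvectorUnitary : Matrix (Fin p) (Fin p) ℝ) := hD_herm.spectral_theorem
        _ = _ := by rw [hofreal, hstar]
    rw [hDeq]
    exact conj_bound hUorth _ _ (abs_nonneg μ) (fun i => hmax i (Finset.mem_univ i))
  set xv : Fin p → ℝ := ⇑(hD_herm.eigenvectorBasis i0) with hxv
  have hEig : D *ᵥ xv = μ • xv := hD_herm.mulVec_eigenvectorBasis i0
  have hxnorm : xv ⬝ᵥ xv = 1 := by
    have h1 : ‖toE xv‖ = 1 := by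
      have : toE xv = (hD_herm.eigenvectorBasis i0 : EuclideanSpace ℝ (Fin p)) := rfl
      rw [this]
      exact hD_herm.eigenvectorBasis.orthonormal.1 i0
    rw [toE_norm] at h1
    nlinarith [dps_nonneg xv, Real.sq_sqrt (dps_nonneg xv), h1]
  have hlower : |μ| ≤ specNorm D := by
    have h := specNorm_mulVec_le D xv
    rw [hEig, hxnorm, Real.sqrt_one, mul_one] at h
    have h2 : (μ • xv) ⬝ᵥ (μ • xv) = μ^2 := by
      rw [smul_dotProduct, dotProduct_smul, hxnorm]
      simp [pow_two]
    rw [h2, Real.sqrt_sq_eq_abs] at h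
    exact h
  have hlam : specNorm D = |μ| := le_antisymm hupper hlower
  -- quadratic forms a and b
  set av := xv ⬝ᵥ (Ph *ᵥ xv) with hav
  set bv := xv ⬝ᵥ (P *ᵥ xv) with hbv
  have hav01 : 0 ≤ av ∧ av ≤ 1 := by
    have := conj_ind_quad hWhat ind hind01 xv
    rw [← hPh, ← hav, hxnorm] at this
    exact this
  have hbv01 : 0 ≤ bv ∧ bv ≤ 1 := by
    have := conj_ind_quad hW ind hind01 xv
    rw [← hP, ← hbv, hxnorm] at this
    exact this
  have hμab : μ = av - bv := by
    have h1 : xv ⬝ᵥ (D *ᵥ xv) = av - bv := by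
      rw [hDdef, Matrix.sub_mulVec, dotProduct_sub]
    have h2 : xv ⬝ᵥ (D *ᵥ xv) = μ := by
      rw [hEig, dotProduct_smul, hxnorm]
      simp
    rw [← h2, h1]
  have habs1 : |μ| ≤ 1 := by
    rw [abs_le]
    constructor <;> [nlinarith [hav01.1, hbv01.2]; nlinarith [hav01.2, hbv01.1]]
  -- Weyl inequalities
  have wey1 : e ⟨r-1, by omega⟩ - ε ≤ ehat ⟨r-1, by omega⟩ := by
    have h := weyl p ⟨r-1, by omega⟩ e ehat W What he hehat hW hWhat
    rw [← hε] at h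
    exact h
  have wey2 : ehat ⟨r, hrp⟩ - ε ≤ e ⟨r, hrp⟩ := by
    have h := weyl p ⟨r, hrp⟩ ehat e What W hehat he hWhat hW
    have hneg : specNorm (W * Matrix.diagonal e * Wᵀ - What * Matrix.diagonal ehat * Whatᵀ)
        = ε := by
      rw [show W * Matrix.diagonal e * Wᵀ - What * Matrix.diagonal ehat * Whatᵀ
        = -(What * Matrix.diagonal ehat * Whatᵀ - W * Matrix.diagonal e * Wᵀ) from
        (neg_sub _ _).symm, specNorm_neg, ← hε]
    rw [hneg] at h
    exact h
  -- main case split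
  rcases le_or_gt (e ⟨r-1, by omega⟩ - e ⟨r, hrp⟩) (2*ε) with hcase | hcase
  · -- small gap: trivial
    rw [hlam]
    nlinarith [abs_nonneg μ]
  · -- large gap
    have hPhx : Ph *ᵥ xv = P *ᵥ xv + μ • xv := by
      have h1 : Ph *ᵥ xv - P *ᵥ xv = μ • xv := by
        rw [← Matrix.sub_mulVec, ← hDdef, hEig]
      linear_combination (norm := module) h1
    have hPxPx : (P *ᵥ xv) ⬝ᵥ (P *ᵥ xv) = bv := proj_dot hsymP hPP xv
    have hPhxPhx : (Ph *ᵥ xv) ⬝ᵥ (Ph *ᵥ xv) = av := proj_dot hsymPh hPhPh xv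
    have hPxc : (P *ᵥ xv) ⬝ᵥ xv = bv := by rw [dotProduct_comm]
    have hPhxc : (Ph *ᵥ xv) ⬝ᵥ xv = av := by rw [dotProduct_comm]
    rcases lt_trichotomy μ 0 with hμneg | hμ0 | hμpos
    · -- negative eigenvalue
      have hν : 0 < -μ := neg_pos.mpr hμneg
      have hsum1 : av + bv = 1 := by
        have w1 : (P *ᵥ xv) ⬝ᵥ (Ph *ᵥ xv) = bv + μ * bv := by
          rw [hPhx, dotProduct_add, hPxPx, dotProduct_smul, hPxc]
          simp
        have hPx : P *ᵥ xv = Ph *ᵥ xv - μ • xv := by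
          rw [hPhx]; abel
        have w2 : (P *ᵥ xv) ⬝ᵥ (Ph *ᵥ xv) = av - μ * av := by
          rw [hPx, sub_dotProduct, hPhxPhx, smul_dotProduct, ← hav]
          simp
        have h3 : av - bv = μ * (av + bv) := by linarith [w1.symm.trans w2]
        have h4 : μ * (av + bv) = μ * 1 := by rw [mul_one, ← h3, hμab]
        exact mul_left_cancel₀ (ne_of_lt hμneg) h4
      have hPx : P *ᵥ xv = Ph *ᵥ xv - μ • xv := by
        rw [hPhx]; abel
      -- sin-theta application with roles swapped
      have hb_pos : 0 < e ⟨r-1, by omega⟩ := by linarith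
      have hgap2 : ehat ⟨r, hrp⟩ < e ⟨r-1, by omega⟩ := by linarith
      have hst := sintheta p r hr hrp ehat e What W hehat he hehatpos hWhat hW hb_pos hgap2
      rw [← hind, ← hP, ← hPh] at hst
      have hneg : specNorm (W * Matrix.diagonal e * Wᵀ - What * Matrix.diagonal ehat * Whatᵀ)
          = ε := by
        rw [show W * Matrix.diagonal e * Wᵀ - What * Matrix.diagonal ehat * Whatᵀ
          = -(What * Matrix.diagonal ehat * Whatᵀ - W * Matrix.diagonal e * Wᵀ) from
          (neg_sub _ _).symm, specNorm_neg, ← hε]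
      rw [hneg] at hst
      set sT := specNorm ((1 - Ph) * P) with hsT
      have hsTnn : 0 ≤ sT := specNorm_nonneg _
      have h2' : sT * (e ⟨r-1, by omega⟩ - e ⟨r, hrp⟩ - ε) ≤ ε := by
        calc sT * (e ⟨r-1, by omega⟩ - e ⟨r, hrp⟩ - ε)
            ≤ sT * (e ⟨r-1, by omega⟩ - ehat ⟨r, hrp⟩) := by
              apply mul_le_mul_of_nonneg_left _ hsTnn
              linarith
          _ ≤ ε := hst
      have hTx : ((1 - Ph) * P) *ᵥ xv = μ • (Ph *ᵥ xv - xv) := by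
        rw [← Matrix.mulVec_mulVec, hPx, Matrix.mulVec_sub, Matrix.mulVec_smul]
        rw [Matrix.sub_mulVec, Matrix.sub_mulVec, Matrix.one_mulVec, Matrix.one_mulVec]
        rw [Matrix.mulVec_mulVec, hPhPh]
        module
      have hexp : (Ph *ᵥ xv - xv) ⬝ᵥ (Ph *ᵥ xv - xv) = 1 - av := by
        rw [dotProduct_sub, sub_dotProduct, sub_dotProduct,
          hxnorm, hPhxPhx, hPhxc, ← hav]
        ring
      have hnsqT : (((1 - Ph) * P) *ᵥ xv) ⬝ᵥ (((1 - Ph) * P) *ᵥ xv) = μ^2 * (1 - av) := by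
        rw [hTx, smul_dotProduct, dotProduct_smul, hexp]
        simp [pow_two]; ring
      have h1' : (-μ)^2 * (1 + -μ)/2 ≤ sT^2 := by
        have h := specNorm_mulVec_sq_le ((1 - Ph) * P) xv
        rw [hnsqT, hxnorm, mul_one, ← hsT] at h
        have hbveq : 1 - av = (1 + -μ)/2 := by linarith [hμab, hsum1]
        calc (-μ)^2 * (1 + -μ)/2 = μ^2 * (1 - av) := by rw [hbveq]; ring
          _ ≤ sT^2 := h
      have hfinal := numfin (e ⟨r-1, by omega⟩ - e ⟨r, hrp⟩) ε (-μ) sT hcase hεnn hν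
        (by rw [abs_of_neg hμneg] at habs1; exact habs1) hsTnn h1' h2'
      rw [hlam, abs_of_neg hμneg]
      linarith
    · -- zero
      rw [hlam, hμ0, abs_zero, mul_zero]
      exact hεnn
    · -- positive eigenvalue
      have hsum1 : av + bv = 1 := by
        have w1 : (P *ᵥ xv) ⬝ᵥ (Ph *ᵥ xv) = bv + μ * bv := by
          rw [hPhx, dotProduct_add, hPxPx, dotProduct_smul, hPxc]
          simp
        have w2 : (P *ᵥ xv) ⬝ᵥ (Ph *ᵥ xv) = av - μ * av := by
          have hPx : P *ᵥ xv = Ph *ᵥ xv - μ • xv := by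
            rw [hPhx]; abel
          rw [hPx, sub_dotProduct, hPhxPhx, smul_dotProduct, ← hav]
          simp
        have h3 : av - bv = μ * (av + bv) := by linarith [w1.symm.trans w2]
        have h4 : μ * (av + bv) = μ * 1 := by rw [mul_one, ← h3, hμab]
        exact mul_left_cancel₀ (ne_of_gt hμpos) h4
      -- sin-theta application
      have hb_pos : 0 < ehat ⟨r-1, by omega⟩ := by linarith
      have hgap2 : e ⟨r, hrp⟩ < ehat ⟨r-1, by omega⟩ := by linarith
      have hst := sintheta p r hr hrp e ehat W What he hehat hepos hW hWhat hb_pos hgap2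
      rw [← hind, ← hP, ← hPh, ← hε] at hst
      set sT := specNorm ((1 - P) * Ph) with hsT
      have hsTnn : 0 ≤ sT := specNorm_nonneg _
      have h2' : sT * (e ⟨r-1, by omega⟩ - e ⟨r, hrp⟩ - ε) ≤ ε := by
        calc sT * (e ⟨r-1, by omega⟩ - e ⟨r, hrp⟩ - ε)
            ≤ sT * (ehat ⟨r-1, by omega⟩ - e ⟨r, hrp⟩) := by
              apply mul_le_mul_of_nonneg_left _ hsTnn
              linarith
          _ ≤ ε := hst
      -- eigenvector estimate
      have hTx : ((1 - P) * Ph) *ᵥ xv = μ • (xv - P *ᵥ xv) := by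
        rw [← Matrix.mulVec_mulVec, hPhx, Matrix.mulVec_add, Matrix.mulVec_smul]
        rw [Matrix.sub_mulVec, Matrix.sub_mulVec, Matrix.one_mulVec, Matrix.one_mulVec]
        rw [Matrix.mulVec_mulVec, hPP]
        module
      have hexp : (xv - P *ᵥ xv) ⬝ᵥ (xv - P *ᵥ xv) = 1 - bv := by
        rw [dotProduct_sub, sub_dotProduct, sub_dotProduct,
          hxnorm, hPxPx, hPxc, hbv]
        ring
      have hnsqT : (((1 - P) * Ph) *ᵥ xv) ⬝ᵥ (((1 - P) * Ph) *ᵥ xv) = μ^2 * (1 - bv) := by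
        rw [hTx, smul_dotProduct, dotProduct_smul, hexp]
        simp [pow_two]; ring
      have h1' : μ^2 * (1 + μ)/2 ≤ sT^2 := by
        have h := specNorm_mulVec_sq_le ((1 - P) * Ph) xv
        rw [hnsqT, hxnorm, mul_one, ← hsT] at h
        have hbveq : 1 - bv = (1 + μ)/2 := by linarith [hμab, hsum1]
        calc μ^2 * (1 + μ)/2 = μ^2 * (1 - bv) := by rw [hbveq]; ring
          _ ≤ sT^2 := h
      have hfinal := numfin (e ⟨r-1, by omega⟩ - e ⟨r, hrp⟩) ε μ sT hcase hεnn hμpos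
        (by rw [abs_of_pos hμpos] at habs1; exact habs1) hsTnn
        (by linarith [h1']) h2'
      rw [hlam, abs_of_pos hμpos]
      linarith
end

section
/- Let 1 ≤ r ≤ p and n ≥ 1 be integers, τ ≥ 1, V ∈ O(p,r), let λ₁ ≥ ⋯ ≥ λ_r > 0 with λ₁/λ_r ≤ τ, set D = diag(√λ₁,…,√λ_r), let U be any real n×r matrix, and define S₀ = (1/n)·V D U'U D V' + I_p. If ‖(1/n)·U'U − I_r‖ < 1/τ, then the l-th largest eigenvalue of S₀ is strictly greater than 1 for every l ∈ {1,…,r} and equals 1 for every l ∈ {r+1,…,p}; moreover, V V' is the orthogonal projection onto the span of the eigenvectors of S₀ with eigenvalues exceeding 1 (the rank-r principal subspace of S₀). -/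
open Matrix

lemma sum_castLE_aux {p r : ℕ} (hrp : r ≤ p) (f : Fin p → ℝ)
    (hf : ∀ k : Fin p, r ≤ (k:ℕ) → f k = 0) :
    ∑ k, f k = ∑ k : Fin r, f (Fin.castLE hrp k) := by
  classical
  calc ∑ k, f k
      = ∑ x ∈ Finset.univ.map ⟨Fin.castLE hrp, Fin.castLE_injective hrp⟩, f x := by
        refine (Finset.sum_subset (Finset.subset_univ _) ?_).symm
        intro x _ hx
        apply hf
        by_contra h
        push_neg at h
        exact hx (Finset.mem_map.mpr ⟨⟨x, h⟩, Finset.mem_univ _, by simp [Fin.castLE]⟩)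
    _ = ∑ k : Fin r, f (Fin.castLE hrp k) := Finset.sum_map _ _ _

lemma exists_extension {p r : ℕ} (hrp : r ≤ p) (A : Matrix (Fin p) (Fin r) ℝ)
    (hA : Aᵀ * A = 1) :
    ∃ W : Matrix (Fin p) (Fin p) ℝ, Wᵀ * W = 1 ∧
      ∀ (i : Fin p) (k : Fin r), W i (Fin.castLE hrp k) = A i k := by
  classical
  set v : Fin p → EuclideanSpace ℝ (Fin p) :=
    fun j => if h : (j:ℕ) < r then WithLp.toLp 2 (fun i => A i ⟨j, h⟩) else 0 with hv
  have horth : Orthonormal ℝ (({j : Fin p | (j:ℕ) < r} : Set (Fin p)).restrict v) := by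
    rw [orthonormal_iff_ite]
    rintro ⟨j, hj⟩ ⟨j', hj'⟩
    have hj2 : (j:ℕ) < r := hj
    have hj2' : (j':ℕ) < r := hj'
    have : (inner ℝ (v j) (v j') : ℝ) = (Aᵀ * A) ⟨j, hj2⟩ ⟨j', hj2'⟩ := by
      simp [hv, hj2, hj2', PiLp.inner_apply, Matrix.mul_apply, mul_comm]
    change inner ℝ (v j) (v j') = _
    simp only [Set.restrict_apply, this, hA, Matrix.one_apply]
    simp [Fin.ext_iff, Subtype.ext_iff]
  obtain ⟨b, hb⟩ := horth.exists_orthonormalBasis_extension_of_card_eq (by simp)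
  refine ⟨fun i k => b k i, ?_, ?_⟩
  · ext k k'
    have := orthonormal_iff_ite.mp b.orthonormal k k'
    rw [PiLp.inner_apply] at this
    simp only [Matrix.mul_apply, transpose_apply, Matrix.one_apply]
    refine (Matrix.mul_apply).trans (Eq.trans ?_ this)
    exact Finset.sum_congr rfl fun x _ => by change b k x * b k' x = _; simp [mul_comm]
  · intro i k
    have hmem : (Fin.castLE hrp k : Fin p) ∈ {j : Fin p | (j:ℕ) < r} := k.2
    show b (Fin.castLE hrp k) i = A i k
    rw [hb _ hmem, hv]
    have h2 : ((Fin.castLE hrp k : Fin p) : ℕ) < r := k.2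
    simp [h2]

lemma quad_bound {m : ℕ} (E : Matrix (Fin m) (Fin m) ℝ) (x : Fin m → ℝ) :
    |x ⬝ᵥ (E *ᵥ x)| ≤ specNorm E * (x ⬝ᵥ x) := by
  set y : EuclideanSpace ℝ (Fin m) := (WithLp.equiv 2 _).symm x with hy
  set L := LinearMap.toContinuousLinearMap (Matrix.toEuclideanLin E) with hL
  have h1 : (inner ℝ (L y) y : ℝ) = x ⬝ᵥ (E *ᵥ x) := by
    simp only [hL, LinearMap.coe_toContinuousLinearMap', hy,
      toEuclideanLin_apply, PiLp.inner_apply]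
    simp [dotProduct, mul_comm, RCLike.inner_apply]
  have h2 : x ⬝ᵥ x = ‖y‖ ^ 2 := by
    rw [← real_inner_self_eq_norm_sq, PiLp.inner_apply]
    simp [dotProduct, hy, sq]
  rw [← h1, h2]
  calc |(inner ℝ (L y) y : ℝ)| ≤ ‖L y‖ * ‖y‖ := by
        simpa using norm_inner_le_norm (𝕜 := ℝ) (L y) y
    _ ≤ (‖L‖ * ‖y‖) * ‖y‖ := by
        have := L.le_opNorm y
        have h0 : (0:ℝ) ≤ ‖y‖ := norm_nonneg _
        nlinarith [norm_nonneg (L y)]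
    _ = specNorm E * ‖y‖ ^ 2 := by rw [specNorm]; ring

lemma posdef_of_close {m : ℕ} (N : Matrix (Fin m) (Fin m) ℝ)
    (hHerm : N.IsHermitian) (hN : specNorm (N - 1) < 1) : N.PosDef := by
  refine Matrix.PosDef.of_dotProduct_mulVec_pos hHerm fun x hx => ?_
  have hxx : 0 < x ⬝ᵥ x := by
    have : 0 ≤ x ⬝ᵥ x := Finset.sum_nonneg fun i _ => mul_self_nonneg _
    rcases this.lt_or_eq with h | h
    · exact h
    · exact absurd ((dotProduct_self_eq_zero).mp h.symm) hx
  have hb := quad_bound (N - 1) x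
  have hmul : N *ᵥ x = x + (N - 1) *ᵥ x := by
    rw [sub_mulVec, one_mulVec]; abel
  have hnn : (0:ℝ) ≤ specNorm (N - 1) := norm_nonneg _
  rw [star_trivial, hmul, dotProduct_add]
  have habs : -(specNorm (N - 1) * (x ⬝ᵥ x)) ≤ x ⬝ᵥ ((N - 1) *ᵥ x) := neg_le_of_abs_le hb
  nlinarith

lemma conj_diag_apply {a b : ℕ} (X : Matrix (Fin a) (Fin b) ℝ) (d : Fin b → ℝ) (i j : Fin a) :
    (X * Matrix.diagonal d * Xᵀ) i j = ∑ k, X i k * d k * X j k := by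
  rw [Matrix.mul_apply]
  exact Finset.sum_congr rfl fun k _ => by rw [Matrix.mul_diagonal, transpose_apply]

/-- Properties of the intermediate matrix `S₀ = (1/n)·V D UᵀU D Vᵀ + I_p`:
if `‖(1/n)·UᵀU − I_r‖ < 1/τ` then the `r` leading eigenvalues of `S₀` exceed `1`,
the remaining ones equal `1`, and `VVᵀ` is the orthogonal projection onto the rank-`r`
principal subspace of `S₀` (witnessed by a sorted orthogonal eigendecomposition). -/
theorem intermediate_matrix_spectrum (p r n : ℕ) (hr : 1 ≤ r) (hrp : r ≤ p) (hn : 1 ≤ n)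
    (tau : ℝ) (htau : 1 ≤ tau)
    (V : Matrix (Fin p) (Fin r) ℝ) (hV : Vᵀ * V = 1)
    (l : Fin r → ℝ) (hl : Antitone l) (hlpos : ∀ i, 0 < l i)
    (hltau : l ⟨0, hr⟩ / l ⟨r-1, by omega⟩ ≤ tau)
    (U : Matrix (Fin n) (Fin r) ℝ)
    (hU : specNorm (((n:ℝ)⁻¹) • (Uᵀ * U) - 1) < 1/tau) :
    ∃ (e : Fin p → ℝ) (W : Matrix (Fin p) (Fin p) ℝ),
      Wᵀ * W = 1 ∧ Antitone e ∧
      ((n:ℝ)⁻¹) • (V * Matrix.diagonal (fun i => Real.sqrt (l i)) * Uᵀ * U *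
          Matrix.diagonal (fun i => Real.sqrt (l i)) * Vᵀ) + 1
        = W * Matrix.diagonal e * Wᵀ ∧
      (∀ i : Fin p, (i:ℕ) < r → 1 < e i) ∧
      (∀ i : Fin p, r ≤ (i:ℕ) → e i = 1) ∧
      V * Vᵀ = (W.submatrix id (Fin.castLE hrp)) *
        (W.submatrix id (Fin.castLE hrp))ᵀ := by
  classical
  set D : Matrix (Fin r) (Fin r) ℝ := Matrix.diagonal (fun i => Real.sqrt (l i)) with hDdef
  have htau0 : (0:ℝ) < tau := lt_of_lt_of_le one_pos htau
  have hE1 : specNorm (((n:ℝ)⁻¹) • (Uᵀ * U) - 1) < 1 :=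
    lt_of_lt_of_le hU (by rw [div_le_one htau0]; exact htau)
  have hNHerm : (((n:ℝ)⁻¹) • (Uᵀ * U)).IsHermitian := by
    unfold Matrix.IsHermitian
    rw [conjTranspose_smul, conjTranspose_mul, conjTranspose_eq_transpose_of_trivial,
        conjTranspose_eq_transpose_of_trivial, transpose_transpose, star_trivial]
  have hN := posdef_of_close _ hNHerm hE1
  set M : Matrix (Fin r) (Fin r) ℝ := ((n:ℝ)⁻¹) • (D * Uᵀ * U * D) with hMdef
  have hsqrtpos : ∀ i, 0 < Real.sqrt (l i) := fun i => Real.sqrt_pos.mpr (hlpos i)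
  have hDsymm : Dᵀ = D := by rw [hDdef, Matrix.diagonal_transpose]
  have hMposdef : M.PosDef := by
    refine Matrix.PosDef.of_dotProduct_mulVec_pos ?_ ?_
    · show Mᴴ = M
      rw [hMdef, conjTranspose_smul, star_trivial, conjTranspose_eq_transpose_of_trivial]
      congr 1
      rw [transpose_mul, transpose_mul, transpose_mul, transpose_transpose, hDsymm]
      simp only [Matrix.mul_assoc]
    · intro x hx
      have hDx : D *ᵥ x ≠ 0 := by
        intro h
        apply hx
        funext i
        have := congrFun h i
        rw [hDdef, mulVec_diagonal] at this
        exact (mul_eq_zero.mp this).resolve_left (ne_of_gt (hsqrtpos i))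
      have hq := hN.dotProduct_mulVec_pos hDx
      rw [star_trivial] at hq ⊢
      have hrw : x ⬝ᵥ (M *ᵥ x)
          = (D *ᵥ x) ⬝ᵥ ((((n:ℝ)⁻¹) • (Uᵀ * U)) *ᵥ (D *ᵥ x)) := by
        rw [hMdef, smul_mulVec, smul_mulVec, dotProduct_smul, dotProduct_smul]
        congr 1
        rw [← mulVec_mulVec, show D * Uᵀ * U = D * (Uᵀ * U) from by rw [Matrix.mul_assoc],
            ← mulVec_mulVec]
        rw [hDdef]
        simp only [dotProduct, mulVec_diagonal]
        exact Finset.sum_congr rfl fun i _ => by ring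
      rw [hrw]
      exact hq
  have hMH := hMposdef.1
  set μ : Fin r → ℝ := hMH.eigenvalues with hμ
  have hμpos : ∀ i, 0 < μ i := fun i => hMposdef.eigenvalues_pos i
  set Q : Matrix (Fin r) (Fin r) ℝ :=
    (Matrix.IsHermitian.eigenvectorUnitary hMH : Matrix (Fin r) (Fin r) ℝ) with hQdef
  have hQunit : Qᵀ * Q = 1 := by
    have h := Matrix.mem_unitaryGroup_iff'.mp (Matrix.IsHermitian.eigenvectorUnitary hMH).2
    rw [Matrix.star_eq_conjTranspose, conjTranspose_eq_transpose_of_trivial] at h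
    exact h
  have hspec : M = Q * Matrix.diagonal μ * Qᵀ := by
    have h := hMH.spectral_theorem
    rw [Unitary.conjStarAlgAut_apply, Matrix.star_eq_conjTranspose, conjTranspose_eq_transpose_of_trivial] at h
    simpa [RCLike.ofReal_real_eq_id] using h
  set σ : Equiv.Perm (Fin r) := Tuple.sort (fun i => -μ i) with hσ
  have hmono := Tuple.monotone_sort (fun i => -μ i)
  have hanti : Antitone (fun k : Fin r => μ (σ k)) := by
    intro a b hab
    have h := hmono hab
    simp only [Function.comp_apply] at h
    simpa using h
  set Q' : Matrix (Fin r) (Fin r) ℝ := Q.submatrix id σ with hQ'def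
  have hQ'unit : Q'ᵀ * Q' = 1 := by
    ext k k'
    have h : (Qᵀ * Q) (σ k) (σ k') = (1 : Matrix (Fin r) (Fin r) ℝ) (σ k) (σ k') := by
      rw [hQunit]
    simp only [Matrix.mul_apply, transpose_apply, Matrix.one_apply] at h ⊢
    simp only [hQ'def, submatrix_apply, id_eq]
    rw [h]
    simp [Equiv.apply_eq_iff_eq]
  have hspec' : M = Q' * Matrix.diagonal (fun k => μ (σ k)) * Q'ᵀ := by
    rw [hspec]
    ext i j
    rw [conj_diag_apply, conj_diag_apply]
    simp only [hQ'def, submatrix_apply, id_eq]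
    exact (Equiv.sum_comp σ (fun m => Q i m * μ m * Q j m)).symm
  set A : Matrix (Fin p) (Fin r) ℝ := V * Q' with hAdef
  have hArth : Aᵀ * A = 1 := by
    rw [hAdef, transpose_mul, Matrix.mul_assoc, ← Matrix.mul_assoc Vᵀ V Q', hV, one_mul,
      hQ'unit]
  obtain ⟨W, hWorth, hWA⟩ := exists_extension hrp A hArth
  have hWWT : W * Wᵀ = 1 := mul_eq_one_comm.mp hWorth
  refine ⟨fun i => if h : (i:ℕ) < r then μ (σ ⟨i, h⟩) + 1 else 1, W, hWorth, ?_, ?_, ?_, ?_, ?_⟩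
  · -- Antitone
    intro a b hab
    by_cases hbr : (b:ℕ) < r
    · have har : (a:ℕ) < r := lt_of_le_of_lt (Fin.le_def.mp hab) hbr
      simp only [dif_pos hbr, dif_pos har]
      have h := hanti (show (⟨a, har⟩ : Fin r) ≤ ⟨b, hbr⟩ from Fin.mk_le_mk.mpr (Fin.le_def.mp hab))
      simpa using h
    · simp only [dif_neg hbr]
      by_cases har : (a:ℕ) < r
      · simp only [dif_pos har]
        have := hμpos (σ ⟨a, har⟩)
        linarith
      · simp only [dif_neg har]
        exact le_rfl
  · -- main identity
    have hL : ((n:ℝ)⁻¹) • (V * D * Uᵀ * U * D * Vᵀ) = V * M * Vᵀ := by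
      rw [hMdef, Matrix.mul_smul, Matrix.smul_mul]
      congr 1
      simp only [Matrix.mul_assoc]
    rw [hL, hspec']
    rw [show V * ((Q' * Matrix.diagonal fun k => μ (σ k)) * Q'ᵀ) * Vᵀ
        = A * Matrix.diagonal (fun k => μ (σ k)) * Aᵀ from by
      rw [hAdef, transpose_mul]; simp only [Matrix.mul_assoc]]
    set e' : Fin p → ℝ := fun i => if h : (i:ℕ) < r then μ (σ ⟨i, h⟩) else 0 with he'
    have hdiag : (Matrix.diagonal (fun i : Fin p =>
        if h : (i:ℕ) < r then μ (σ ⟨i, h⟩) + 1 else 1))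
        = Matrix.diagonal e' + (1 : Matrix (Fin p) (Fin p) ℝ) := by
      rw [← Matrix.diagonal_one, Matrix.diagonal_add]
      exact congrArg Matrix.diagonal (funext fun i => by
        by_cases h : (i:ℕ) < r <;> simp [he', h])
    rw [hdiag, Matrix.mul_add, Matrix.add_mul, Matrix.mul_one, hWWT]
    congr 1
    ext i j
    rw [conj_diag_apply, conj_diag_apply]
    rw [sum_castLE_aux hrp _ (fun k hk => by
      have : e' k = 0 := by simp [he', not_lt.mpr hk]
      rw [this, mul_zero, zero_mul])]
    refine Finset.sum_congr rfl fun k _ => ?_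
    rw [hWA, hWA]
    have hek : e' (Fin.castLE hrp k) = μ (σ k) := by
      have h2 : ((Fin.castLE hrp k : Fin p) : ℕ) < r := k.2
      simp [he', h2]
    rw [hek]
  · intro i hi
    simp only [dif_pos hi]
    have := hμpos (σ ⟨i, hi⟩)
    linarith
  · intro i hi
    simp only [dif_neg (not_lt.mpr hi)]
  · have hW1 : W.submatrix id (Fin.castLE hrp) = A := by
      ext i k
      rw [submatrix_apply]
      exact hWA i k
    rw [hW1, hAdef, transpose_mul, Matrix.mul_assoc V Q' _, ← Matrix.mul_assoc Q' Q'ᵀ Vᵀ,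
      mul_eq_one_comm.mp hQ'unit, Matrix.one_mul]
end
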